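/- arXiv:1312.3289 — 3 statements merged into one kernel-verified Lean document; each statement's English description precedes it below -/
import Mathlib

section
/- For every real number r > 0 and every probability vector (p_i)_{i=1}^N with p_i > 0, N ≥ 2, and constant c ∈ (0,1), there exists a unique s > 0 such that ∑_{i=1}^N (p_i c^r)^{s/(s+r)} = 1. -/
/-- For every `r > 0`, probability vector `(p i)` with positive entries, `N ≥ 2`,
and `c ∈ (0,1)`, there is a unique `s > 0` with `∑ i, (p i * c ^ r) ^ (s / (s + r)) = 1`. -/
theorem stmt0 (r : ℝ) (hr : 0 < r) (N : ℕ) (hN : 2 ≤ N) (p : Fin N → ℝ)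
    (hp : ∀ i, 0 < p i) (hsum : ∑ i, p i = 1) (c : ℝ) (hc : 0 < c) (hc1 : c < 1) :
    ∃! s : ℝ, 0 < s ∧ ∑ i, (p i * c ^ r) ^ (s / (s + r)) = 1 := by
  set a : Fin N → ℝ := fun i => p i * c ^ r with ha_def
  have hcr : (0:ℝ) < c ^ r := Real.rpow_pos_of_pos hc r
  have hcr1 : c ^ r < 1 := Real.rpow_lt_one hc.le hc1 hr
  have ha0 : ∀ i, 0 < a i := fun i => mul_pos (hp i) hcr
  have hp1 : ∀ i, p i ≤ 1 := by
    intro i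
    rw [← hsum]
    exact Finset.single_le_sum (fun j _ => (hp j).le) (Finset.mem_univ i)
  have ha1 : ∀ i, a i < 1 := fun i =>
    lt_of_le_of_lt (by simpa using mul_le_mul_of_nonneg_right (hp1 i) hcr.le) hcr1
  set F : ℝ → ℝ := fun s => ∑ i, a i ^ (s / (s + r)) with hF_def
  -- strict antitonicity on Ioi 0
  have hexp_mono : ∀ s₁ s₂ : ℝ, 0 < s₁ → s₁ < s₂ → s₁ / (s₁ + r) < s₂ / (s₂ + r) := by
    intro s₁ s₂ h₁ h₂
    rw [div_lt_div_iff₀ (by linarith) (by linarith)]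
    nlinarith
  have hanti : StrictAntiOn F (Set.Ioi 0) := by
    intro s₁ hs₁ s₂ hs₂ h₁₂
    apply Finset.sum_lt_sum_of_nonempty
    · exact Finset.univ_nonempty_iff.mpr ⟨⟨0, by omega⟩⟩
    · intro i _
      exact Real.rpow_lt_rpow_of_exponent_gt (ha0 i) (ha1 i)
        (hexp_mono s₁ s₂ hs₁ h₁₂)
  -- continuity of F on Ici 0
  have hcont : ContinuousOn F (Set.Ici 0) := by
    apply continuousOn_finset_sum
    intro i _
    apply ContinuousOn.rpow continuousOn_const
    · exact ContinuousOn.div continuousOn_id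
        (continuous_id.add continuous_const).continuousOn
        (fun x hx => by simp only [Set.mem_Ici] at hx; positivity)
    · intro x _; left; exact (ha0 i).ne'
  -- value at 0
  have hF0 : F 0 = N := by
    simp [hF_def, Real.rpow_zero]
  -- F continuous at 0, so F > 1 near 0
  have hN1 : (1:ℝ) < N := by
    have : (2:ℝ) ≤ N := by exact_mod_cast hN
    linarith
  have hev0 : ∀ᶠ s in nhdsWithin 0 (Set.Ioi 0), 1 < F s := by
    have hcw : Filter.Tendsto F (nhdsWithin 0 (Set.Ici 0)) (nhds (F 0)) :=
      hcont 0 (Set.self_mem_Ici)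
    have := hcw.mono_left (nhdsWithin_mono _ Set.Ioi_subset_Ici_self)
    exact this.eventually_const_lt (by rw [hF0]; exact hN1)
  obtain ⟨ε, hε1, hε0⟩ := (hev0.and self_mem_nhdsWithin).exists
  -- limit at infinity
  have htend_exp : Filter.Tendsto (fun s : ℝ => s / (s + r)) Filter.atTop (nhds 1) := by
    have h1 : Filter.Tendsto (fun s : ℝ => 1 - r / (s + r)) Filter.atTop (nhds 1) := by
      have := Filter.Tendsto.const_div_atTop
        (Filter.tendsto_atTop_add_const_right Filter.atTop r Filter.tendsto_id) r
      simpa using tendsto_const_nhds.sub this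
    apply h1.congr'
    filter_upwards [Filter.eventually_gt_atTop 0] with s hs
    field_simp
    ring
  have hsum_a : ∑ i, a i = c ^ r := by
    rw [ha_def]; rw [← Finset.sum_mul, hsum, one_mul]
  have htendF : Filter.Tendsto F Filter.atTop (nhds (c ^ r)) := by
    rw [← hsum_a]
    apply tendsto_finset_sum
    intro i _
    have : ContinuousAt (fun t : ℝ => a i ^ t) 1 :=
      Real.continuousAt_const_rpow (ha0 i).ne'
    have := this.tendsto.comp htend_exp
    simpa [Real.rpow_one, Function.comp_def] using this
  have hevM : ∀ᶠ s in Filter.atTop, F s < 1 := htendF.eventually_lt_const hcr1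
  obtain ⟨M, hM1, hM0⟩ := (hevM.and (Filter.eventually_gt_atTop 0)).exists
  -- ε < M
  have hεM : ε < M := by
    by_contra h
    push_neg at h
    rcases eq_or_lt_of_le h with h' | h'
    · rw [h'] at hM1; linarith
    · have := hanti hM0 hε0 h'
      linarith
  -- IVT
  have hsub : Set.Icc ε M ⊆ Set.Ici (0:ℝ) := fun x hx => le_trans hε0.le hx.1
  have hiv : Set.Icc (F M) (F ε) ⊆ F '' Set.Icc ε M :=
    intermediate_value_Icc' hεM.le (hcont.mono hsub)
  obtain ⟨s, hs_mem, hs_eq⟩ := hiv ⟨hM1.le, hε1.le⟩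
  refine ⟨s, ⟨lt_of_lt_of_le hε0 hs_mem.1, hs_eq⟩, ?_⟩
  rintro t ⟨ht0, ht_eq⟩
  have hs0 : 0 < s := lt_of_lt_of_le hε0 hs_mem.1
  exact hanti.injOn ht0 hs0 (by rw [hs_eq]; exact ht_eq)
end

section
/- With notation as in the main theorem, let t_r > 0 solve m^{−r t_r/(t_r+r)} ∑_{j∈G_y} q_j^{(1−θ) t_r/(t_r+r)} (∑_{i∈G_{x,j}} p_{ij}^{t_r/(t_r+r)})^θ = 1 and s_r > 0 solve m^{−r s_r/(s_r+r)} (∑_{(i,j)∈G} p_{ij}^{s_r/(s_r+r)})^θ (∑_{j∈G_y} q_j^{s_r/(s_r+r)})^{1−θ} = 1. Then t_r ≤ s_r, with equality if and only if the quantities C_{j,r} := q_j^{−s_r/(s_r+r)} ∑_{i∈G_{x,j}} p_{ij}^{s_r/(s_r+r)} are equal for all j ∈ G_y. -/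
open Real Finset

lemma young_le {θ x y : ℝ} (hθ0 : 0 < θ) (hθ1 : θ < 1) (hx : 0 < x) (hy : 0 < y) :
    x ^ (1 - θ) * y ^ θ ≤ (1 - θ) * x + θ * y := by
  have hz : (-1 : ℝ) ≤ y / x - 1 := by
    have : 0 < y / x := div_pos hy hx
    linarith
  have key := rpow_one_add_le_one_add_mul_self hz hθ0.le hθ1.le
  rw [add_sub_cancel] at key
  have hxθ : (0:ℝ) < x ^ θ := Real.rpow_pos_of_pos hx θ
  have h1 : x ^ (1 - θ) * y ^ θ = x * (y / x) ^ θ := by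
    rw [Real.div_rpow hy.le hx.le, Real.rpow_sub hx, Real.rpow_one]
    field_simp
  rw [h1]
  calc x * (y / x) ^ θ ≤ x * (1 + θ * (y / x - 1)) := mul_le_mul_of_nonneg_left key hx.le
    _ = (1 - θ) * x + θ * y := by field_simp; ring

lemma young_lt {θ x y : ℝ} (hθ0 : 0 < θ) (hθ1 : θ < 1) (hx : 0 < x) (hy : 0 < y)
    (hne : x ≠ y) : x ^ (1 - θ) * y ^ θ < (1 - θ) * x + θ * y := by
  have hz : (-1 : ℝ) ≤ y / x - 1 := by
    have : 0 < y / x := div_pos hy hx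
    linarith
  have hz' : y / x - 1 ≠ 0 := by
    intro h
    apply hne
    field_simp at h
    linarith
  have key := rpow_one_add_lt_one_add_mul_self hz hz' hθ0 hθ1
  rw [add_sub_cancel] at key
  have hxθ : (0:ℝ) < x ^ θ := Real.rpow_pos_of_pos hx θ
  have h1 : x ^ (1 - θ) * y ^ θ = x * (y / x) ^ θ := by
    rw [Real.div_rpow hy.le hx.le, Real.rpow_sub hx, Real.rpow_one]
    field_simp
  rw [h1]
  calc x * (y / x) ^ θ < x * (1 + θ * (y / x - 1)) := mul_lt_mul_of_pos_left key hx
    _ = (1 - θ) * x + θ * y := by field_simp; ring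

lemma young_eq_iff {θ x y : ℝ} (hθ0 : 0 < θ) (hθ1 : θ < 1) (hx : 0 < x) (hy : 0 < y) :
    x ^ (1 - θ) * y ^ θ = (1 - θ) * x + θ * y ↔ x = y := by
  constructor
  · intro h
    by_contra hne
    exact (young_lt hθ0 hθ1 hx hy hne).ne h
  · rintro rfl
    rw [← Real.rpow_add hx, sub_add_cancel, Real.rpow_one]
    ring

lemma hoelder_eq {θ : ℝ} (hθ0 : 0 < θ) (hθ1 : θ < 1) (J : Finset ℕ) (hJ : J.Nonempty)
    (a b : ℕ → ℝ) (ha : ∀ j ∈ J, 0 < a j) (hb : ∀ j ∈ J, 0 < b j) :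
    (∑ j ∈ J, (a j) ^ (1 - θ) * (b j) ^ θ ≤ (∑ j ∈ J, a j) ^ (1 - θ) * (∑ j ∈ J, b j) ^ θ) ∧
    ((∑ j ∈ J, (a j) ^ (1 - θ) * (b j) ^ θ = (∑ j ∈ J, a j) ^ (1 - θ) * (∑ j ∈ J, b j) ^ θ) ↔
      ∀ j ∈ J, a j * (∑ j' ∈ J, b j') = b j * (∑ j' ∈ J, a j')) := by
  set A := ∑ j ∈ J, a j with hA
  set B := ∑ j ∈ J, b j with hB
  have hApos : 0 < A := Finset.sum_pos ha hJ
  have hBpos : 0 < B := Finset.sum_pos hb hJ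
  have hxpos : ∀ j ∈ J, 0 < a j * B := fun j hj => mul_pos (ha j hj) hBpos
  have hypos : ∀ j ∈ J, 0 < b j * A := fun j hj => mul_pos (hb j hj) hApos
  have hptle : ∀ j ∈ J, (a j * B) ^ (1 - θ) * (b j * A) ^ θ
      ≤ (1 - θ) * (a j * B) + θ * (b j * A) :=
    fun j hj => young_le hθ0 hθ1 (hxpos j hj) (hypos j hj)
  have hterm : ∀ j ∈ J, (a j * B) ^ (1 - θ) * (b j * A) ^ θ
      = (a j ^ (1 - θ) * b j ^ θ) * (B ^ (1 - θ) * A ^ θ) := by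
    intro j hj
    rw [Real.mul_rpow (ha j hj).le hBpos.le, Real.mul_rpow (hb j hj).le hApos.le]
    ring
  have hC : 0 < B ^ (1 - θ) * A ^ θ :=
    mul_pos (Real.rpow_pos_of_pos hBpos _) (Real.rpow_pos_of_pos hApos _)
  have hsumL : ∑ j ∈ J, (a j * B) ^ (1 - θ) * (b j * A) ^ θ
      = (∑ j ∈ J, a j ^ (1 - θ) * b j ^ θ) * (B ^ (1 - θ) * A ^ θ) := by
    rw [Finset.sum_mul]
    exact Finset.sum_congr rfl hterm
  have hsumR : ∑ j ∈ J, ((1 - θ) * (a j * B) + θ * (b j * A)) = A * B := by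
    rw [Finset.sum_add_distrib]
    have h1 : ∑ j ∈ J, (1 - θ) * (a j * B) = (1 - θ) * (A * B) := by
      rw [hA, Finset.sum_mul, ← Finset.mul_sum]
    have h2 : ∑ j ∈ J, θ * (b j * A) = θ * (B * A) := by
      rw [hB, Finset.sum_mul, ← Finset.mul_sum]
    rw [h1, h2]; ring
  have hAB : A * B = (A ^ (1 - θ) * B ^ θ) * (B ^ (1 - θ) * A ^ θ) := by
    have e1 : A ^ (1 - θ) * A ^ θ = A := by
      rw [← Real.rpow_add hApos, sub_add_cancel, Real.rpow_one]
    have e2 : B ^ (1 - θ) * B ^ θ = B := by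
      rw [← Real.rpow_add hBpos, sub_add_cancel, Real.rpow_one]
    calc A * B = (A ^ (1 - θ) * A ^ θ) * (B ^ (1 - θ) * B ^ θ) := by rw [e1, e2]
      _ = (A ^ (1 - θ) * B ^ θ) * (B ^ (1 - θ) * A ^ θ) := by ring
  have hmain : (∑ j ∈ J, a j ^ (1 - θ) * b j ^ θ) * (B ^ (1 - θ) * A ^ θ)
      ≤ (A ^ (1 - θ) * B ^ θ) * (B ^ (1 - θ) * A ^ θ) := by
    rw [← hsumL, ← hAB]
    exact (Finset.sum_le_sum hptle).trans hsumR.le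
  refine ⟨le_of_mul_le_mul_right hmain hC, ?_, ?_⟩
  · intro heq
    have hsums : ∑ j ∈ J, (a j * B) ^ (1 - θ) * (b j * A) ^ θ
        = ∑ j ∈ J, ((1 - θ) * (a j * B) + θ * (b j * A)) := by
      rw [hsumL, heq, ← hAB, hsumR]
    have h := (Finset.sum_eq_sum_iff_of_le hptle).mp hsums
    intro j hj
    exact (young_eq_iff hθ0 hθ1 (hxpos j hj) (hypos j hj)).mp (h j hj)
  · intro hcond
    have hsums : ∑ j ∈ J, (a j * B) ^ (1 - θ) * (b j * A) ^ θ
        = ∑ j ∈ J, ((1 - θ) * (a j * B) + θ * (b j * A)) := by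
      apply Finset.sum_congr rfl
      intro j hj
      exact (young_eq_iff hθ0 hθ1 (hxpos j hj) (hypos j hj)).mpr (hcond j hj)
    have h : (∑ j ∈ J, a j ^ (1 - θ) * b j ^ θ) * (B ^ (1 - θ) * A ^ θ)
        = (A ^ (1 - θ) * B ^ θ) * (B ^ (1 - θ) * A ^ θ) := by
      rw [← hsumL, hsums, hsumR, hAB]
    exact mul_right_cancel₀ hC.ne' h

/-- `t_r ≤ s_r`, with equality iff the quantities
`C_{j,r} = q_j^{-s_r/(s_r+r)} ∑_i p_{ij}^{s_r/(s_r+r)}` agree for all `j ∈ G_y`. -/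
theorem stmt8 (G : Finset (ℕ × ℕ)) (hG : 2 ≤ G.card)
    (p : ℕ × ℕ → ℝ) (hp : ∀ x ∈ G, 0 < p x) (hsum : ∑ x ∈ G, p x = 1)
    (q : ℕ → ℝ) (hq : ∀ j, q j = ∑ x ∈ G.filter (fun x => x.2 = j), p x)
    (m n : ℕ) (hm : 2 ≤ m) (hmn : m < n) (θ : ℝ) (hθ : θ = Real.log m / Real.log n)
    (r t s : ℝ) (hr : 0 < r) (ht : 0 < t) (hs : 0 < s)
    (heqt : (m : ℝ) ^ (-(r * (t / (t + r)))) *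
      ∑ j ∈ G.image Prod.snd, q j ^ ((1 - θ) * (t / (t + r))) *
        (∑ x ∈ G.filter (fun x => x.2 = j), p x ^ (t / (t + r))) ^ θ = 1)
    (heqs : (m : ℝ) ^ (-(r * (s / (s + r)))) * (∑ x ∈ G, p x ^ (s / (s + r))) ^ θ *
      (∑ j ∈ G.image Prod.snd, q j ^ (s / (s + r))) ^ (1 - θ) = 1) :
    t ≤ s ∧
    (t = s ↔ ∀ j ∈ G.image Prod.snd, ∀ j' ∈ G.image Prod.snd,
      q j ^ (-(s / (s + r))) * ∑ x ∈ G.filter (fun x => x.2 = j), p x ^ (s / (s + r)) =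
      q j' ^ (-(s / (s + r))) * ∑ x ∈ G.filter (fun x => x.2 = j'), p x ^ (s / (s + r))) := by
  set J := G.image Prod.snd with hJdef
  set κt := t / (t + r) with hκtdef
  set κs := s / (s + r) with hκsdef
  have hm1 : (1 : ℝ) < (m : ℝ) := by exact_mod_cast Nat.lt_of_lt_of_le Nat.one_lt_two hm
  have hn1 : (1 : ℝ) < (n : ℝ) := by
    have : 2 ≤ n := le_trans hm hmn.le
    exact_mod_cast Nat.lt_of_lt_of_le Nat.one_lt_two this
  have hθ0 : 0 < θ := by
    rw [hθ]
    exact div_pos (Real.log_pos hm1) (Real.log_pos hn1)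
  have hθ1 : θ < 1 := by
    rw [hθ]
    exact div_lt_one (Real.log_pos hn1) |>.mpr
      (Real.log_lt_log (by linarith) (by exact_mod_cast hmn))
  have hGne : G.Nonempty := Finset.card_pos.mp (by omega)
  have hJne : J.Nonempty := hGne.image _
  have hp1 : ∀ x ∈ G, p x ≤ 1 := by
    intro x hx
    have := Finset.single_le_sum (f := p) (fun y hy => (hp y hy).le) hx
    rwa [hsum] at this
  have hq0 : ∀ j ∈ J, 0 < q j := by
    intro j hj
    obtain ⟨x, hx, hxj⟩ := Finset.mem_image.mp hj
    rw [hq]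
    exact Finset.sum_pos (fun y hy => hp y (Finset.mem_filter.mp hy).1)
      ⟨x, Finset.mem_filter.mpr ⟨hx, hxj⟩⟩
  have hq1 : ∀ j, q j ≤ 1 := by
    intro j
    rw [hq, ← hsum]
    exact Finset.sum_le_sum_of_subset_of_nonneg (Finset.filter_subset _ _)
      (fun y hy _ => (hp y hy).le)
  have hbpos : ∀ (c : ℝ), ∀ j ∈ J, 0 < ∑ x ∈ G.filter (fun x => x.2 = j), p x ^ c := by
    intro c j hj
    obtain ⟨x, hx, hxj⟩ := Finset.mem_image.mp hj
    exact Finset.sum_pos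
      (fun y hy => Real.rpow_pos_of_pos (hp y (Finset.mem_filter.mp hy).1) c)
      ⟨x, Finset.mem_filter.mpr ⟨hx, hxj⟩⟩
  have hSpos : ∀ c : ℝ, 0 < ∑ j ∈ J,
      q j ^ ((1 - θ) * c) * (∑ x ∈ G.filter (fun x => x.2 = j), p x ^ c) ^ θ := by
    intro c
    exact Finset.sum_pos (fun j hj => mul_pos (Real.rpow_pos_of_pos (hq0 j hj) _)
      (Real.rpow_pos_of_pos (hbpos c j hj) _)) hJne
  -- strict decrease of F
  have Fdec : ∀ c₁ c₂ : ℝ, c₁ < c₂ →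
      (m : ℝ) ^ (-(r * c₂)) * (∑ j ∈ J,
        q j ^ ((1 - θ) * c₂) * (∑ x ∈ G.filter (fun x => x.2 = j), p x ^ c₂) ^ θ)
      < (m : ℝ) ^ (-(r * c₁)) * (∑ j ∈ J,
        q j ^ ((1 - θ) * c₁) * (∑ x ∈ G.filter (fun x => x.2 = j), p x ^ c₁) ^ θ) := by
    intro c₁ c₂ hc
    have hS2le : (∑ j ∈ J, q j ^ ((1 - θ) * c₂) *
          (∑ x ∈ G.filter (fun x => x.2 = j), p x ^ c₂) ^ θ)
        ≤ ∑ j ∈ J, q j ^ ((1 - θ) * c₁) *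
          (∑ x ∈ G.filter (fun x => x.2 = j), p x ^ c₁) ^ θ := by
      apply Finset.sum_le_sum
      intro j hj
      have t1 : q j ^ ((1 - θ) * c₂) ≤ q j ^ ((1 - θ) * c₁) :=
        Real.rpow_le_rpow_of_exponent_ge (hq0 j hj) (hq1 j)
          (mul_le_mul_of_nonneg_left hc.le (by linarith))
      have t2 : (∑ x ∈ G.filter (fun x => x.2 = j), p x ^ c₂) ^ θ
          ≤ (∑ x ∈ G.filter (fun x => x.2 = j), p x ^ c₁) ^ θ := by
        apply Real.rpow_le_rpow (hbpos c₂ j hj).le _ hθ0.le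
        apply Finset.sum_le_sum
        intro x hx
        exact Real.rpow_le_rpow_of_exponent_ge (hp x (Finset.mem_filter.mp hx).1)
          (hp1 x (Finset.mem_filter.mp hx).1) hc.le
      exact mul_le_mul t1 t2 (Real.rpow_pos_of_pos (hbpos c₂ j hj) _).le
        (Real.rpow_pos_of_pos (hq0 j hj) _).le
    calc (m : ℝ) ^ (-(r * c₂)) * (∑ j ∈ J, q j ^ ((1 - θ) * c₂) *
            (∑ x ∈ G.filter (fun x => x.2 = j), p x ^ c₂) ^ θ)
        ≤ (m : ℝ) ^ (-(r * c₂)) * (∑ j ∈ J, q j ^ ((1 - θ) * c₁) *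
            (∑ x ∈ G.filter (fun x => x.2 = j), p x ^ c₁) ^ θ) :=
          mul_le_mul_of_nonneg_left hS2le (Real.rpow_nonneg (by positivity) _)
      _ < (m : ℝ) ^ (-(r * c₁)) * (∑ j ∈ J, q j ^ ((1 - θ) * c₁) *
            (∑ x ∈ G.filter (fun x => x.2 = j), p x ^ c₁) ^ θ) := by
          apply mul_lt_mul_of_pos_right _ (hSpos c₁)
          exact (Real.rpow_lt_rpow_left_iff hm1).mpr (by nlinarith)
  have hκts : t < s ↔ κt < κs := by
    rw [hκtdef, hκsdef, div_lt_div_iff₀ (by linarith) (by linarith)]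
    constructor <;> intro h <;> nlinarith
  have hκst : s < t ↔ κs < κt := by
    rw [hκtdef, hκsdef, div_lt_div_iff₀ (by linarith) (by linarith)]
    constructor <;> intro h <;> nlinarith
  -- Hölder at κs
  have ha : ∀ j ∈ J, 0 < q j ^ κs := fun j hj => Real.rpow_pos_of_pos (hq0 j hj) _
  obtain ⟨hHle, hHiff⟩ := hoelder_eq hθ0 hθ1 J hJne (fun j => q j ^ κs)
    (fun j => ∑ x ∈ G.filter (fun x => x.2 = j), p x ^ κs) ha (hbpos κs)
  -- rewrite S at κs in Hölder form
  have hSs : (∑ j ∈ J, q j ^ ((1 - θ) * κs) *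
        (∑ x ∈ G.filter (fun x => x.2 = j), p x ^ κs) ^ θ)
      = ∑ j ∈ J, (q j ^ κs) ^ (1 - θ) *
        (∑ x ∈ G.filter (fun x => x.2 = j), p x ^ κs) ^ θ := by
    apply Finset.sum_congr rfl
    intro j hj
    rw [mul_comm (1 - θ) κs, Real.rpow_mul (hq0 j hj).le]
  have hfib : ∑ x ∈ G, p x ^ κs
      = ∑ j ∈ J, ∑ x ∈ G.filter (fun x => x.2 = j), p x ^ κs :=
    (Finset.sum_fiberwise_of_maps_to (fun x hx => Finset.mem_image_of_mem _ hx) _).symm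
  have heqs' : (m : ℝ) ^ (-(r * κs)) * ((∑ j ∈ J, q j ^ κs) ^ (1 - θ) *
      (∑ j ∈ J, ∑ x ∈ G.filter (fun x => x.2 = j), p x ^ κs) ^ θ) = 1 := by
    rw [← hfib]; linear_combination heqs
  have hmpos : (0 : ℝ) < (m : ℝ) ^ (-(r * κs)) := Real.rpow_pos_of_pos (by linarith) _
  have hFs_le : (m : ℝ) ^ (-(r * κs)) * (∑ j ∈ J, q j ^ ((1 - θ) * κs) *
      (∑ x ∈ G.filter (fun x => x.2 = j), p x ^ κs) ^ θ) ≤ 1 := by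
    rw [hSs]
    calc (m : ℝ) ^ (-(r * κs)) * (∑ j ∈ J, (q j ^ κs) ^ (1 - θ) *
          (∑ x ∈ G.filter (fun x => x.2 = j), p x ^ κs) ^ θ)
        ≤ (m : ℝ) ^ (-(r * κs)) * ((∑ j ∈ J, q j ^ κs) ^ (1 - θ) *
          (∑ j ∈ J, ∑ x ∈ G.filter (fun x => x.2 = j), p x ^ κs) ^ θ) :=
          mul_le_mul_of_nonneg_left hHle hmpos.le
      _ = 1 := heqs'
  have hApos : 0 < ∑ j ∈ J, q j ^ κs := Finset.sum_pos ha hJne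
  have hBpos : 0 < ∑ j ∈ J, ∑ x ∈ G.filter (fun x => x.2 = j), p x ^ κs :=
    Finset.sum_pos (hbpos κs) hJne
  -- condition equivalence
  have hcond_iff : (∀ j ∈ J, ∀ j' ∈ J,
      q j ^ (-κs) * ∑ x ∈ G.filter (fun x => x.2 = j), p x ^ κs =
      q j' ^ (-κs) * ∑ x ∈ G.filter (fun x => x.2 = j'), p x ^ κs) ↔
      (∀ j ∈ J, q j ^ κs * (∑ j' ∈ J, ∑ x ∈ G.filter (fun x => x.2 = j'), p x ^ κs)
        = (∑ x ∈ G.filter (fun x => x.2 = j), p x ^ κs) * (∑ j' ∈ J, q j' ^ κs)) := by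
    constructor
    · intro h j hj
      have step : ∀ j' ∈ J, q j ^ κs * (∑ x ∈ G.filter (fun x => x.2 = j'), p x ^ κs)
          = (∑ x ∈ G.filter (fun x => x.2 = j), p x ^ κs) * q j' ^ κs := by
        intro j' hj'
        have e := h j hj j' hj'
        rw [Real.rpow_neg (hq0 j hj).le, Real.rpow_neg (hq0 j' hj').le] at e
        have h1 := (ha j hj).ne'
        have h2 := (ha j' hj').ne'
        field_simp at e
        linarith [e]
      rw [Finset.mul_sum, Finset.mul_sum]
      exact Finset.sum_congr rfl step
    · intro h j hj j' hj'
      have e1 := h j hj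
      have e2 := h j' hj'
      rw [Real.rpow_neg (hq0 j hj).le, Real.rpow_neg (hq0 j' hj').le]
      have hq1' := (ha j hj).ne'
      have hq2' := (ha j' hj').ne'
      have key1 : (q j ^ κs)⁻¹ * (∑ x ∈ G.filter (fun x => x.2 = j), p x ^ κs)
          = (∑ j' ∈ J, ∑ x ∈ G.filter (fun x => x.2 = j'), p x ^ κs)
            / (∑ j' ∈ J, q j' ^ κs) := by
        rw [eq_div_iff hApos.ne']
        field_simp
        linarith [e1]
      have key2 : (q j' ^ κs)⁻¹ * (∑ x ∈ G.filter (fun x => x.2 = j'), p x ^ κs)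
          = (∑ j' ∈ J, ∑ x ∈ G.filter (fun x => x.2 = j'), p x ^ κs)
            / (∑ j' ∈ J, q j' ^ κs) := by
        rw [eq_div_iff hApos.ne']
        field_simp
        linarith [e2]
      rw [key1, key2]
  constructor
  · -- t ≤ s
    by_contra hcon
    push_neg at hcon
    have hlt := Fdec κs κt (hκst.mp hcon)
    rw [heqt] at hlt
    linarith [hFs_le]
  · constructor
    · intro hts
      have hκeq : κt = κs := by rw [hκtdef, hκsdef, hts]
      rw [hκeq] at heqt
      -- S κs = A^{1-θ} B^θ
      have hSeq : (∑ j ∈ J, (q j ^ κs) ^ (1 - θ) *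
            (∑ x ∈ G.filter (fun x => x.2 = j), p x ^ κs) ^ θ)
          = (∑ j ∈ J, q j ^ κs) ^ (1 - θ) *
            (∑ j ∈ J, ∑ x ∈ G.filter (fun x => x.2 = j), p x ^ κs) ^ θ := by
        apply mul_left_cancel₀ hmpos.ne'
        rw [heqs']
        rw [← hSs]
        exact heqt
      exact hcond_iff.mpr (hHiff.mp hSeq)
    · intro hcond
      have hSeq := hHiff.mpr (hcond_iff.mp hcond)
      have hFs1 : (m : ℝ) ^ (-(r * κs)) * (∑ j ∈ J, q j ^ ((1 - θ) * κs) *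
          (∑ x ∈ G.filter (fun x => x.2 = j), p x ^ κs) ^ θ) = 1 := by
        rw [hSs, hSeq]
        exact heqs'
      rcases lt_trichotomy t s with h | h | h
      · exfalso
        have hlt := Fdec κt κs (hκts.mp h)
        rw [heqt, hFs1] at hlt
        exact lt_irrefl _ hlt
      · exact h
      · exfalso
        have hlt := Fdec κs κt (hκst.mp h)
        rw [heqt, hFs1] at hlt
        exact lt_irrefl _ hlt
end

section
/- Let ν be a Borel probability measure on ℝ² and suppose there exist C > 0 and t > 0 such that ν(B_ε(x)) ≤ C ε^t for all x ∈ ℝ² and ε > 0. Then there exists a constant c (depending on C, t) such that for every k ∈ ℕ and every finite set α ⊂ ℝ² with card(α) ≤ k, one has exp(∫ log d(x, α) dν(x)) ≥ e^{−(log k + c)/t}; in particular the k-th geometric mean quantization error ê_k(ν) = inf_α ∫ log d(x,α) dν satisfies ê_k(ν) ≥ −(log k + c)/t. -/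
open MeasureTheory
open scoped ENNReal NNReal

set_option maxHeartbeats 1000000

/-- A uniform Frostman bound `ν(B_ε(x)) ≤ C ε^t` yields a lower bound
`ê_k(ν) ≥ -(log k + c)/t` for the geometric mean quantization errors. -/
theorem stmt18 (ν : Measure (EuclideanSpace ℝ (Fin 2))) [IsProbabilityMeasure ν]
    (C t : ℝ) (hC : 0 < C) (ht : 0 < t)
    (hfrost : ∀ (x : EuclideanSpace ℝ (Fin 2)) (ε : ℝ), 0 < ε →
      ν (Metric.closedBall x ε) ≤ ENNReal.ofReal (C * ε ^ t)) :
    ∃ c : ℝ, ∀ k : ℕ, 1 ≤ k → ∀ α : Finset (EuclideanSpace ℝ (Fin 2)),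
      α.Nonempty → α.card ≤ k →
      (-(Real.log k + c) / t ≤ ∫ x, Real.log (Metric.infDist x (α : Set _)) ∂ν ∧
        Real.exp (-(Real.log k + c) / t) ≤
          Real.exp (∫ x, Real.log (Metric.infDist x (α : Set _)) ∂ν)) := by
  classical
  set C' : ℝ := max C 1 with hC'def
  have hC'1 : (1 : ℝ) ≤ C' := le_max_right _ _
  have hC'pos : (0 : ℝ) < C' := lt_of_lt_of_le one_pos hC'1
  set r : ℝ := Real.exp (-t) with hrdef
  have hr0 : (0 : ℝ) < r := Real.exp_pos _
  have hr1 : r < 1 := by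
    rw [hrdef]
    exact Real.exp_lt_one_iff.mpr (neg_lt_zero.mpr ht)
  have hr1' : (0 : ℝ) < 1 - r := by linarith
  refine ⟨Real.log C' + t * (1 + (1 - r)⁻¹), ?_⟩
  intro k hk α hα hcard
  set c : ℝ := Real.log C' + t * (1 + (1 - r)⁻¹) with hcdef
  have hc0 : 0 ≤ c := by
    have h1 : (0 : ℝ) ≤ Real.log C' := Real.log_nonneg hC'1
    have h2 : (0 : ℝ) ≤ (1 - r)⁻¹ := le_of_lt (inv_pos.mpr hr1')
    have h3 : (0:ℝ) ≤ t * (1 + (1 - r)⁻¹) :=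
      mul_nonneg ht.le (by linarith)
    have h4 := add_nonneg h1 h3
    exact hcdef ▸ h4
  have hk0 : (0 : ℝ) < k := by exact_mod_cast hk
  have hlogk : (0 : ℝ) ≤ Real.log k := Real.log_nonneg (by exact_mod_cast hk)
  set B : ℝ := (Real.log k + c) / t with hBdef
  have hB0 : 0 ≤ B := div_nonneg (by linarith) ht.le
  set D : EuclideanSpace ℝ (Fin 2) → ℝ := fun x => Metric.infDist x (α : Set _) with hDdef
  set f : EuclideanSpace ℝ (Fin 2) → ℝ := fun x => Real.log (D x) with hfdef
  have hDcont : Continuous D := Metric.continuous_infDist_pt _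
  have hfmeas : Measurable f := Real.measurable_log.comp hDcont.measurable
  -- the bad sets
  set S : ℕ → Set (EuclideanSpace ℝ (Fin 2)) :=
    fun n => {x | D x < Real.exp (-(n : ℝ))} with hSdef
  have hSmeas : ∀ n, MeasurableSet (S n) :=
    fun n => measurableSet_lt hDcont.measurable measurable_const
  -- Frostman bound on ν (S n)
  have hfro : ∀ n : ℕ, ν (S n) ≤ ENNReal.ofReal ((k : ℝ) * C' * Real.exp (-(n : ℝ) * t)) := by
    intro n
    set ε : ℝ := Real.exp (-(n : ℝ)) with hεdef
    have hε0 : 0 < ε := Real.exp_pos _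
    have hsub : S n ⊆ ⋃ a ∈ α, Metric.closedBall a ε := by
      intro x hx
      obtain ⟨y, hy, hxy⟩ := (Metric.infDist_lt_iff (by exact_mod_cast hα.to_set)).mp hx
      exact Set.mem_biUnion hy (le_of_lt hxy)
    have hεt : ε ^ t = Real.exp (-(n : ℝ) * t) := by
      rw [Real.rpow_def_of_pos hε0, Real.log_exp]
    calc ν (S n) ≤ ν (⋃ a ∈ α, Metric.closedBall a ε) := measure_mono hsub
      _ ≤ ∑ a ∈ α, ν (Metric.closedBall a ε) := measure_biUnion_finset_le _ _
      _ ≤ ∑ _a ∈ α, ENNReal.ofReal (C * ε ^ t) :=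
          Finset.sum_le_sum (fun a _ => hfrost a ε hε0)
      _ = (α.card : ℝ≥0∞) * ENNReal.ofReal (C * ε ^ t) := by
          rw [Finset.sum_const, nsmul_eq_mul]
      _ ≤ (k : ℝ≥0∞) * ENNReal.ofReal (C' * ε ^ t) := by
          have hCC' : C * ε ^ t ≤ C' * ε ^ t := by
            have hεt0 : 0 ≤ ε ^ t := Real.rpow_nonneg hε0.le t
            exact mul_le_mul_of_nonneg_right (le_max_left C 1) hεt0
          exact mul_le_mul' (by exact_mod_cast hcard) (ENNReal.ofReal_le_ofReal hCC')
      _ = ENNReal.ofReal ((k : ℝ) * C' * Real.exp (-(n : ℝ) * t)) := by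
          rw [← hεt, ← ENNReal.ofReal_natCast k, ← ENNReal.ofReal_mul (by positivity)]
          ring_nf
  -- choice of N
  set N : ℕ := ⌈Real.log ((k : ℝ) * C') / t⌉₊ with hNdef
  have hlogca : 0 ≤ Real.log ((k : ℝ) * C') :=
    Real.log_nonneg (by nlinarith [hC'1, (show (1:ℝ) ≤ (k:ℝ) by exact_mod_cast hk)])
  have hNt : Real.log ((k : ℝ) * C') ≤ (N : ℝ) * t := by
    have h1 : Real.log ((k : ℝ) * C') / t ≤ (N : ℝ) := Nat.le_ceil _
    calc Real.log ((k : ℝ) * C') = Real.log ((k : ℝ) * C') / t * t := by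
          field_simp
      _ ≤ (N : ℝ) * t := by gcongr
  have hdecay : (k : ℝ) * C' * Real.exp (-(N : ℝ) * t) ≤ 1 := by
    have h1 : (k : ℝ) * C' ≤ Real.exp ((N : ℝ) * t) := by
      calc (k : ℝ) * C' = Real.exp (Real.log ((k : ℝ) * C')) := by
            rw [Real.exp_log (by positivity)]
        _ ≤ Real.exp ((N : ℝ) * t) := Real.exp_le_exp.mpr hNt
    calc (k : ℝ) * C' * Real.exp (-(N : ℝ) * t)
        ≤ Real.exp ((N : ℝ) * t) * Real.exp (-(N : ℝ) * t) := by
          gcongr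
      _ = 1 := by rw [← Real.exp_add]; ring_nf; exact Real.exp_zero
  -- tail geometric bound
  have htail : ∀ m : ℕ, ν (S (m + N)) ≤ ENNReal.ofReal r ^ m := by
    intro m
    refine (hfro (m + N)).trans ?_
    rw [← ENNReal.ofReal_pow hr0.le]
    apply ENNReal.ofReal_le_ofReal
    have : Real.exp (-(((m : ℝ) + N)) * t) =
        Real.exp (-(N : ℝ) * t) * r ^ m := by
      rw [hrdef, ← Real.exp_nat_mul, ← Real.exp_add]
      ring_nf
    have hcast : ((m + N : ℕ) : ℝ) = (m : ℝ) + N := by push_cast; ring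
    rw [hcast, this, ← mul_assoc]
    have h2 : 0 ≤ r ^ m := pow_nonneg hr0.le m
    nlinarith
  -- total sum bound
  have hsum : (∑' n, ν (S n)) ≤ ENNReal.ofReal B := by
    have hgeo : (∑' m : ℕ, ENNReal.ofReal r ^ m) = (1 - ENNReal.ofReal r)⁻¹ :=
      ENNReal.tsum_geometric _
    have hbound : ∀ n : ℕ, (∑ i ∈ Finset.range n, ν (S i)) ≤
        (N : ℝ≥0∞) + ENNReal.ofReal ((1 - r)⁻¹) := by
      intro n
      have hinv : (1 - ENNReal.ofReal r)⁻¹ = ENNReal.ofReal ((1 - r)⁻¹) := by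
        rw [← ENNReal.ofReal_one, ← ENNReal.ofReal_sub _ hr0.le,
          ENNReal.ofReal_inv_of_pos hr1']
      rcases le_total n N with hn | hn
      · calc (∑ i ∈ Finset.range n, ν (S i)) ≤ ∑ _i ∈ Finset.range n, 1 :=
              Finset.sum_le_sum (fun i _ => prob_le_one)
          _ = (n : ℝ≥0∞) := by simp
          _ ≤ (N : ℝ≥0∞) := by exact_mod_cast hn
          _ ≤ _ := le_self_add
      · rw [← Finset.sum_range_add_sum_Ico _ hn]
        have h1 : (∑ i ∈ Finset.range N, ν (S i)) ≤ (N : ℝ≥0∞) := by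
          calc (∑ i ∈ Finset.range N, ν (S i)) ≤ ∑ _i ∈ Finset.range N, 1 :=
                Finset.sum_le_sum (fun i _ => prob_le_one)
            _ = (N : ℝ≥0∞) := by simp
        have h2 : (∑ i ∈ Finset.Ico N n, ν (S i)) ≤ ENNReal.ofReal ((1 - r)⁻¹) := by
          calc (∑ i ∈ Finset.Ico N n, ν (S i))
              ≤ ∑ i ∈ Finset.Ico N n, ENNReal.ofReal r ^ (i - N) := by
                refine Finset.sum_le_sum (fun i hi => ?_)
                have hNi : N ≤ i := (Finset.mem_Ico.mp hi).1
                have := htail (i - N)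
                rwa [Nat.sub_add_cancel hNi] at this
            _ = ∑ j ∈ Finset.range (n - N), ENNReal.ofReal r ^ (N + j - N) := by
                rw [Finset.sum_Ico_eq_sum_range]
            _ = ∑ j ∈ Finset.range (n - N), ENNReal.ofReal r ^ j := by
                refine Finset.sum_congr rfl (fun j _ => ?_)
                rw [Nat.add_sub_cancel_left]
            _ ≤ ∑' j : ℕ, ENNReal.ofReal r ^ j := ENNReal.sum_le_tsum _
            _ = (1 - ENNReal.ofReal r)⁻¹ := hgeo
            _ = ENNReal.ofReal ((1 - r)⁻¹) := hinv
        exact add_le_add h1 h2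
    have hNB : (N : ℝ) + (1 - r)⁻¹ ≤ B := by
      have h3 : (N : ℝ) < Real.log ((k : ℝ) * C') / t + 1 :=
        Nat.ceil_lt_add_one (div_nonneg hlogca ht.le)
      have h4 : Real.log ((k : ℝ) * C') = Real.log k + Real.log C' :=
        Real.log_mul (ne_of_gt hk0) (ne_of_gt hC'pos)
      rw [h4] at h3
      have ht' : t ≠ 0 := ne_of_gt ht
      have h5 : B = (Real.log k + Real.log C') / t + 1 + (1 - r)⁻¹ := by
        rw [hBdef, hcdef]
        field_simp
        ring
      rw [h5]
      linarith
    calc (∑' n, ν (S n)) ≤ (N : ℝ≥0∞) + ENNReal.ofReal ((1 - r)⁻¹) :=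
          ENNReal.tsum_le_of_sum_range_le hbound
      _ = ENNReal.ofReal ((N : ℝ) + (1 - r)⁻¹) := by
          rw [ENNReal.ofReal_add (by positivity) (le_of_lt (inv_pos.mpr hr1')),
            ENNReal.ofReal_natCast]
      _ ≤ ENNReal.ofReal B := ENNReal.ofReal_le_ofReal hNB
  -- pointwise bound of the negative part by indicators
  have hpt : ∀ x, ENNReal.ofReal (max (-(f x)) 0) ≤
      ∑' n, (S n).indicator (fun _ => (1 : ℝ≥0∞)) x := by
    intro x
    rcases le_or_gt (-(f x)) 0 with h | h
    · rw [max_eq_right h]; simp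
    · have hD0 : 0 < D x := by
        have hge : (0 : ℝ) ≤ D x := Metric.infDist_nonneg
        rcases hge.lt_or_eq with h0 | h0
        · exact h0
        · exfalso
          have hfx : f x = 0 := by
            show Real.log (D x) = 0
            rw [← h0, Real.log_zero]
          rw [hfx] at h
          simp at h
      set m : ℕ := ⌈-(f x)⌉₊ with hmdef
      have hmem : ∀ n < m, x ∈ S n := by
        intro n hn
        have h1 : (n : ℝ) < -(f x) := Nat.lt_ceil.mp hn
        have h2 : Real.log (D x) < -(n : ℝ) := by
          rw [hfdef] at h1; simp only at h1; linarith
        show D x < Real.exp (-(n : ℝ))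
        calc D x = Real.exp (Real.log (D x)) := (Real.exp_log hD0).symm
          _ < Real.exp (-(n : ℝ)) := Real.exp_lt_exp.mpr h2
      calc ENNReal.ofReal (max (-(f x)) 0) = ENNReal.ofReal (-(f x)) := by
            rw [max_eq_left h.le]
        _ ≤ (m : ℝ≥0∞) := by
            rw [← ENNReal.ofReal_natCast]
            exact ENNReal.ofReal_le_ofReal (Nat.le_ceil _)
        _ = ∑ n ∈ Finset.range m, (S n).indicator (fun _ => (1 : ℝ≥0∞)) x := by
            rw [Finset.sum_congr rfl
              (fun n hn => Set.indicator_of_mem (hmem n (Finset.mem_range.mp hn)) _)]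
            simp
        _ ≤ ∑' n, (S n).indicator (fun _ => (1 : ℝ≥0∞)) x := ENNReal.sum_le_tsum _
  -- the integral of the negative part is at most B
  have hneg : ∫ x, max (-(f x)) 0 ∂ν ≤ B := by
    have hmeas' : AEStronglyMeasurable (fun x => max (-(f x)) 0) ν :=
      (hfmeas.neg.max measurable_const).aestronglyMeasurable
    have heq : ∫ x, max (-(f x)) 0 ∂ν =
        (∫⁻ x, ENNReal.ofReal (max (-(f x)) 0) ∂ν).toReal :=
      integral_eq_lintegral_of_nonneg_ae
        (Filter.Eventually.of_forall fun x => le_max_right _ _) hmeas'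
    rw [heq]
    apply ENNReal.toReal_le_of_le_ofReal hB0
    calc (∫⁻ x, ENNReal.ofReal (max (-(f x)) 0) ∂ν)
        ≤ ∫⁻ x, ∑' n, (S n).indicator (fun _ => (1 : ℝ≥0∞)) x ∂ν :=
          lintegral_mono hpt
      _ = ∑' n, ∫⁻ x, (S n).indicator (fun _ => (1 : ℝ≥0∞)) x ∂ν :=
          lintegral_tsum (fun n => ((measurable_const.indicator (hSmeas n))).aemeasurable)
      _ = ∑' n, ν (S n) := by
          congr 1; funext n
          exact lintegral_indicator_one (hSmeas n)
      _ ≤ ENNReal.ofReal B := hsum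
  -- conclude
  have hmain : -(Real.log k + c) / t ≤ ∫ x, f x ∂ν := by
    have hBeq : -(Real.log k + c) / t = -B := by rw [hBdef]; ring
    rw [hBeq]
    by_cases hint : Integrable f ν
    · have hnegint : Integrable (fun x => max (-(f x)) 0) ν := hint.neg.pos_part
      have h1 : ∫ x, -(max (-(f x)) 0) ∂ν ≤ ∫ x, f x ∂ν := by
        apply integral_mono hnegint.neg hint
        intro x
        simp only [Pi.neg_apply]
        rw [neg_le]
        exact le_max_left _ _
      rw [integral_neg] at h1
      linarith
    · rw [integral_undef hint]
      linarith
  exact ⟨hmain, Real.exp_le_exp.mpr hmain⟩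
end
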